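/- For k odd and n odd, the number of maximum non-attacking rook placements on the circular chained board B^∘_{n,k} equals k·⌈n/2⌉·((n)_{⌈n/2⌉})^{⌊k/2⌋}·((n)_{⌊n/2⌋})^{⌈k/2⌉}. -/

import Mathlib

/-- Non-attacking rook placement on the linear chained board `B⁻_{n,k}`:
rooks are triples (board, row, column). -/
def LinNonAtt (n k : ℕ) (R : Finset (Fin k × Fin n × Fin n)) : Prop :=
  (∀ r ∈ R, ∀ s ∈ R, r ≠ s → r.1 = s.1 → r.2.1 ≠ s.2.1 ∧ r.2.2 ≠ s.2.2) ∧
  (∀ r ∈ R, ∀ s ∈ R, (r.1 : ℕ) + 1 = (s.1 : ℕ) → r.2.1 ≠ s.2.2)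

/-- Non-attacking rook placement on the circular chained board `B°_{n,k}`. -/
def CircNonAtt (n k : ℕ) (R : Finset (Fin k × Fin n × Fin n)) : Prop :=
  (∀ r ∈ R, ∀ s ∈ R, r ≠ s → r.1 = s.1 → r.2.1 ≠ s.2.1 ∧ r.2.2 ≠ s.2.2) ∧
  (∀ r ∈ R, ∀ s ∈ R, ((r.1 : ℕ) + 1) % k = (s.1 : ℕ) → r.2.1 ≠ s.2.2)

/-- Number of rooks of `R` on board `i`. -/
def bCount {n k : ℕ} (R : Finset (Fin k × Fin n × Fin n)) (i : Fin k) : ℕ :=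
  (R.filter fun r => r.1 = i).card

/-- `a_{i-1}` with the convention `a_0 = 0` (linear case). -/
def prevL {k : ℕ} (a : Fin k → ℕ) (i : Fin k) : ℕ :=
  if i.val = 0 then 0
  else a ⟨i.val - 1, Nat.lt_of_le_of_lt (Nat.sub_le _ _) i.isLt⟩

/-- `a_{i-1}` with cyclic index convention (circular case). -/
def prevC {k : ℕ} (a : Fin k → ℕ) (i : Fin k) : ℕ :=
  a ⟨(i.val + (k - 1)) % k, Nat.mod_lt _ i.pos⟩



open Finset

open scoped Classical in
lemma board_count {n : ℕ} (C D : Finset (Fin n)) :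
    Fintype.card {p : Finset (Fin n × Fin n) //
        (∀ x ∈ p, ∀ y ∈ p, x ≠ y → x.1 ≠ y.1 ∧ x.2 ≠ y.2) ∧
        p.image Prod.snd = C ∧ ∀ x ∈ p, x.1 ∈ D}
      = D.card.descFactorial C.card := by
  classical
  have hcard : D.card.descFactorial C.card = Fintype.card (↥C ↪ ↥D) := by
    rw [Fintype.card_embedding_eq, Fintype.card_coe, Fintype.card_coe]
  rw [hcard]
  refine Fintype.card_congr (Equiv.symm (Equiv.ofBijective (fun f => ?_) ⟨?_, ?_⟩))
  · refine ⟨C.attach.map ⟨fun c => ((f c).1, c.1), ?_⟩, ?_, ?_, ?_⟩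
    · intro a b h
      exact Subtype.ext (congrArg Prod.snd h)
    · intro x hx y hy hxy
      simp only [mem_map, Function.Embedding.coeFn_mk] at hx hy
      obtain ⟨a, _, rfl⟩ := hx
      obtain ⟨b, _, rfl⟩ := hy
      have hab : a ≠ b := by rintro rfl; exact hxy rfl
      constructor
      · intro h
        exact hab (f.injective (Subtype.ext h))
      · intro h
        exact hab (Subtype.ext h)
    · ext c
      simp only [mem_image, mem_map, Function.Embedding.coeFn_mk]
      constructor
      · rintro ⟨x, ⟨a, _, rfl⟩, rfl⟩
        exact a.2
      · intro hc
        exact ⟨((f ⟨c, hc⟩).1, c), ⟨⟨c, hc⟩, mem_attach _ _, rfl⟩, rfl⟩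
    · intro x hx
      simp only [mem_map, Function.Embedding.coeFn_mk] at hx
      obtain ⟨a, _, rfl⟩ := hx
      exact (f a).2
  · -- injective
    intro f g h
    have h' := congrArg (fun q => q.1) h
    simp only at h'
    apply DFunLike.ext
    intro c
    apply Subtype.ext
    have hc : ((f c).1, c.1) ∈ C.attach.map ⟨fun c => ((g c).1, c.1), fun a b h => Subtype.ext (congrArg Prod.snd h)⟩ := by
      rw [← h']
      exact mem_map_of_mem _ (mem_attach _ _)
    simp only [mem_map, Function.Embedding.coeFn_mk] at hc
    obtain ⟨b, _, hb⟩ := hc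
    have : b = c := Subtype.ext (congrArg Prod.snd hb)
    subst this
    exact (congrArg Prod.fst hb).symm
  · -- surjective
    rintro ⟨p, h1, h2, h3⟩
    have hex : ∀ c : ↥C, ∃! x, x ∈ p ∧ Prod.snd x = c.1 := by
      rintro ⟨c, hc⟩
      rw [← h2] at hc
      obtain ⟨x, hx, hxc⟩ := mem_image.1 hc
      refine ⟨x, ⟨hx, hxc⟩, ?_⟩
      rintro y ⟨hy, hyc⟩
      by_contra hne
      exact (h1 y hy x hx hne).2 (hyc.trans hxc.symm)
    set g : ↥C → Fin n × Fin n := fun c => Finset.choose _ p (hex c) with hg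
    have hgmem : ∀ c, g c ∈ p := fun c => Finset.choose_mem (fun x => Prod.snd x = c.1) p (hex c)
    have hgsnd : ∀ c, (g c).2 = c.1 := fun c => Finset.choose_property (fun x => Prod.snd x = c.1) p (hex c)
    refine ⟨⟨fun c => ⟨(g c).1, h3 _ (hgmem c)⟩, ?_⟩, ?_⟩
    · intro a b hab
      have : (g a).1 = (g b).1 := congrArg Subtype.val hab
      have hgg : g a = g b := by
        by_contra hne
        exact (h1 _ (hgmem a) _ (hgmem b) hne).1 this
      exact Subtype.ext ((hgsnd a).symm.trans (by rw [hgg, hgsnd b]))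
    · apply Subtype.ext
      simp only
      ext x
      simp only [mem_map, Function.Embedding.coeFn_mk]
      constructor
      · rintro ⟨a, _, rfl⟩
        have := hgmem a
        show ((g a).1, a.1) ∈ p
        rwa [show ((g a).1, a.1) = g a from Prod.ext rfl (hgsnd a).symm]
      · intro hx
        have hxc : x.2 ∈ C := h2 ▸ mem_image_of_mem _ hx
        refine ⟨⟨x.2, hxc⟩, mem_attach _ _, ?_⟩
        have hux : g ⟨x.2, hxc⟩ = x := by
          have := (hex ⟨x.2, hxc⟩).unique ⟨hgmem _, hgsnd _⟩ ⟨hx, rfl⟩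
          exact this
        show ((g ⟨x.2, hxc⟩).1, x.2) = x
        rw [hux]

/-- split a rook set into boards -/
def boardsEquiv (n k : ℕ) : Finset (Fin k × Fin n × Fin n) ≃ (Fin k → Finset (Fin n × Fin n)) where
  toFun R := fun i => (R.filter fun r => r.1 = i).image Prod.snd
  invFun P := univ.filter fun r => r.2 ∈ P r.1
  left_inv R := by
    ext ⟨i, x⟩
    simp only [mem_filter, mem_univ, true_and, mem_image, mem_filter]
    constructor
    · rintro ⟨⟨a, b⟩, ⟨hmem, h1⟩, h2⟩
      simp only at h1 h2
      subst h1; subst h2; exact hmem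
    · intro h
      exact ⟨(i, x), ⟨h, rfl⟩, rfl⟩
  right_inv P := by
    funext i
    ext x
    simp only [mem_image, mem_filter, mem_univ, true_and]
    constructor
    · rintro ⟨⟨a, b⟩, ⟨hmem, h1⟩, h2⟩
      simp only at h1 h2
      subst h1; subst h2; exact hmem
    · intro h
      exact ⟨(i, x), ⟨h, rfl⟩, rfl⟩

lemma mem_boardsEquiv {n k : ℕ} (R : Finset (Fin k × Fin n × Fin n)) (i : Fin k)
    (x : Fin n × Fin n) : x ∈ boardsEquiv n k R i ↔ (i, x) ∈ R := by
  simp only [boardsEquiv, Equiv.coe_fn_mk, mem_image, mem_filter]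
  constructor
  · rintro ⟨⟨a, b⟩, ⟨hmem, h1⟩, h2⟩
    simp only at h1 h2
    subst h1; subst h2; exact hmem
  · intro h
    exact ⟨(i, x), ⟨h, rfl⟩, rfl⟩

lemma bCount_eq_card {n k : ℕ} (R : Finset (Fin k × Fin n × Fin n)) (i : Fin k) :
    bCount R i = (boardsEquiv n k R i).card := by
  refine (Finset.card_image_of_injOn ?_).symm
  rintro ⟨a, x⟩ hx ⟨b, y⟩ hy h
  simp only [mem_coe, mem_filter] at hx hy
  simp only at h
  exact Prod.ext (hx.2.trans hy.2.symm) h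

lemma fin_succ_val {k : ℕ} [NeZero k] (i : Fin k) : ((i + 1 : Fin k) : ℕ) = ((i : ℕ) + 1) % k := by
  rw [Fin.add_def, Fin.val_one']
  simp [Nat.add_mod]

lemma circNonAtt_iff {n k : ℕ} [NeZero k] (R : Finset (Fin k × Fin n × Fin n)) :
    CircNonAtt n k R ↔
      (∀ i, ∀ x ∈ boardsEquiv n k R i, ∀ y ∈ boardsEquiv n k R i,
          x ≠ y → x.1 ≠ y.1 ∧ x.2 ≠ y.2) ∧
      (∀ i : Fin k, ∀ x ∈ boardsEquiv n k R i, ∀ y ∈ boardsEquiv n k R (i + 1), x.1 ≠ y.2) := by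
  constructor
  · rintro ⟨h1, h2⟩
    constructor
    · intro i x hx y hy hxy
      rw [mem_boardsEquiv] at hx hy
      exact h1 _ hx _ hy (by simp [hxy, Prod.ext_iff]) rfl
    · intro i x hx y hy
      rw [mem_boardsEquiv] at hx hy
      exact h2 _ hx _ hy (by rw [← fin_succ_val])
  · rintro ⟨h1, h2⟩
    constructor
    · rintro ⟨i, x⟩ hx ⟨j, y⟩ hy hne (rfl : i = j)
      have := h1 i x ((mem_boardsEquiv _ _ _).2 hx) y ((mem_boardsEquiv _ _ _).2 hy)
        (fun h => hne (by rw [h]))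
      exact this
    · rintro ⟨i, x⟩ hx ⟨j, y⟩ hy hij
      have hj : j = i + 1 := by
        apply Fin.ext
        rw [fin_succ_val]
        exact hij.symm
      subst hj
      exact h2 i x ((mem_boardsEquiv _ _ _).2 hx) y ((mem_boardsEquiv _ _ _).2 hy)

open scoped Classical in
lemma card_finsets {n m : ℕ} : Fintype.card {C : Finset (Fin n) // C.card = m} = n.choose m := by
  rw [Fintype.card_subtype]
  have : (univ.filter fun C : Finset (Fin n) => C.card = m) = Finset.powersetCard m univ := by
    rw [Finset.powersetCard_eq_filter, Finset.powerset_univ]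
  rw [this, Finset.card_powersetCard, Finset.card_fin]

open scoped Classical in
lemma fiber_count (n k : ℕ) [NeZero k] (a : Fin k → ℕ) :
    Nat.card {R : Finset (Fin k × Fin n × Fin n) // CircNonAtt n k R ∧ ∀ i, bCount R i = a i}
      = ∏ i : Fin k, (n.choose (a i)) * ((n - a (i + 1)).descFactorial (a i)) := by
  classical
  have e : {R : Finset (Fin k × Fin n × Fin n) // CircNonAtt n k R ∧ ∀ i, bCount R i = a i}
      ≃ {P : Fin k → Finset (Fin n × Fin n) //
          (∀ i, ∀ x ∈ P i, ∀ y ∈ P i, x ≠ y → x.1 ≠ y.1 ∧ x.2 ≠ y.2) ∧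
          (∀ i : Fin k, ∀ x ∈ P i, ∀ y ∈ P (i + 1), x.1 ≠ y.2) ∧
          (∀ i, (P i).card = a i)} := by
    refine (boardsEquiv n k).subtypeEquiv ?_
    intro R
    rw [circNonAtt_iff]
    constructor
    · rintro ⟨⟨h1, h2⟩, h3⟩
      exact ⟨h1, h2, fun i => by rw [← bCount_eq_card]; exact h3 i⟩
    · rintro ⟨h1, h2, h3⟩
      exact ⟨⟨h1, h2⟩, fun i => by rw [bCount_eq_card]; exact h3 i⟩
  rw [Nat.card_congr e, Nat.card_eq_fintype_card, Fintype.card_subtype]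
  set pred : (Fin k → Finset (Fin n × Fin n)) → Prop := fun P =>
      (∀ i, ∀ x ∈ P i, ∀ y ∈ P i, x ≠ y → x.1 ≠ y.1 ∧ x.2 ≠ y.2) ∧
      (∀ i : Fin k, ∀ x ∈ P i, ∀ y ∈ P (i + 1), x.1 ≠ y.2) ∧
      (∀ i, (P i).card = a i) with hpred
  set colF : (Fin k → Finset (Fin n × Fin n)) → (Fin k → Finset (Fin n)) :=
      fun P i => (P i).image Prod.snd with hcolF
  set t : Finset (Fin k → Finset (Fin n)) :=
      univ.filter fun Cc => ∀ i, (Cc i).card = a i with ht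
  have himg : ∀ P, (∀ i, ∀ x ∈ P i, ∀ y ∈ P i, x ≠ y → x.1 ≠ y.1 ∧ x.2 ≠ y.2) →
      ∀ i, (colF P i).card = (P i).card := by
    intro P hloc i
    refine Finset.card_image_of_injOn ?_
    intro x hx y hy hxy
    by_contra hne
    exact (hloc i x hx y hy hne).2 hxy
  have hmap : ∀ P ∈ univ.filter pred, colF P ∈ t := by
    intro P hP
    rw [mem_filter] at hP
    rw [ht, mem_filter]
    exact ⟨mem_univ _, fun i => by rw [himg P hP.2.1 i]; exact hP.2.2.2 i⟩
  rw [card_eq_sum_card_fiberwise hmap]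
  have hfiber : ∀ Cc ∈ t, ((univ.filter pred).filter fun P => colF P = Cc).card
      = ∏ i : Fin k, ((n - a (i + 1)).descFactorial (a i)) := by
    intro Cc hCc
    rw [ht, mem_filter] at hCc
    have hCcard : ∀ i, (Cc i).card = a i := hCc.2
    set L : Fin k → Finset (Finset (Fin n × Fin n)) := fun i =>
        univ.filter (fun p => (∀ x ∈ p, ∀ y ∈ p, x ≠ y → x.1 ≠ y.1 ∧ x.2 ≠ y.2) ∧
          p.image Prod.snd = Cc i ∧ ∀ x ∈ p, x.1 ∈ (Cc (i + 1))ᶜ) with hL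
    have hset : (univ.filter pred).filter (fun P => colF P = Cc)
        = univ.filter fun P => ∀ i, P i ∈ L i := by
      ext P
      simp only [mem_filter, mem_univ, true_and, hL, hpred]
      constructor
      · rintro ⟨⟨hloc, hcross, hcard⟩, hcf⟩
        intro i
        refine ⟨hloc i, ?_, ?_⟩
        · rw [← hcf]
        · intro x hx
          rw [Finset.mem_compl]
          intro hmem
          rw [← hcf] at hmem
          obtain ⟨y, hy, hyx⟩ := Finset.mem_image.1 hmem
          exact hcross i x hx y hy hyx.symm
      · intro h
        refine ⟨⟨fun i => (h i).1, ?_, ?_⟩, ?_⟩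
        · intro i x hx y hy
          have hxD := (h i).2.2 x hx
          rw [Finset.mem_compl] at hxD
          intro hxy
          exact hxD (by rw [hxy, ← (h (i + 1)).2.1]; exact Finset.mem_image_of_mem _ hy)
        · intro i
          rw [← hCcard i, ← (h i).2.1]
          exact (himg P (fun j => (h j).1) i).symm
        · funext i
          exact (h i).2.1
    rw [hset]
    have e2 : {P : Fin k → Finset (Fin n × Fin n) // ∀ i, P i ∈ L i} ≃ ∀ i, {p // p ∈ L i} :=
      Equiv.subtypePiEquivPi (p := fun (i : Fin k) (p : Finset (Fin n × Fin n)) => p ∈ L i)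
    rw [← Fintype.card_subtype, Fintype.card_congr e2, Fintype.card_pi]
    refine Finset.prod_congr rfl fun i _ => ?_
    rw [Fintype.card_coe]
    have hbc := board_count (Cc i) ((Cc (i + 1))ᶜ)
    rw [Fintype.card_subtype] at hbc
    rw [Finset.card_compl, Fintype.card_fin, hCcard, hCcard] at hbc
    rw [hL]
    convert hbc using 2
  rw [Finset.sum_congr rfl hfiber, Finset.sum_const]
  have htcard : t.card = ∏ i : Fin k, n.choose (a i) := by
    have e3 : {Cc : Fin k → Finset (Fin n) // ∀ i, (Cc i).card = a i}
        ≃ ∀ i, {C : Finset (Fin n) // C.card = a i} :=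
      Equiv.subtypePiEquivPi (p := fun (i : Fin k) (C : Finset (Fin n)) => C.card = a i)
    rw [ht, ← Fintype.card_subtype, Fintype.card_congr e3, Fintype.card_pi]
    exact Finset.prod_congr rfl fun i _ => card_finsets
  rw [htcard, smul_eq_mul, ← Finset.prod_mul_distrib]

lemma sum_alt (m : ℕ) (j : ℕ) :
    ∑ i ∈ range (2 * j + 1), (if Even i then m else m + 1) = (2 * m + 1) * j + m := by
  induction j with
  | zero => simp
  | succ j ih =>
    rw [show 2 * (j + 1) + 1 = (2 * j + 1) + 1 + 1 from by ring, Finset.sum_range_succ,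
      Finset.sum_range_succ, ih]
    have h1 : ¬ Even (2 * j + 1) := by simp [Nat.even_add_one]
    have h2 : Even (2 * j + 1 + 1) := by simp [Nat.even_add_one, h1]
    rw [if_neg h1, if_pos h2]
    ring

lemma prod_alt (x y : ℕ) (j : ℕ) :
    ∏ i ∈ range (2 * j), (if Even i then x else y) = (x * y) ^ j := by
  induction j with
  | zero => simp
  | succ j ih =>
    rw [show 2 * (j + 1) = (2 * j) + 1 + 1 from by ring, Finset.prod_range_succ,
      Finset.prod_range_succ, ih]
    have h1 : Even (2 * j) := ⟨j, by ring⟩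
    have h2 : ¬ Even (2 * j + 1) := by simp [Nat.even_add_one, h1]
    rw [if_pos h1, if_neg h2]
    ring

open Fin.NatCast Fin.CommRing in
lemma classify (m k : ℕ) [NeZero k] (hk : Odd k) (n : ℕ) (hm : n = 2 * m + 1)
    (a : Fin k → ℕ)
    (h1 : ∀ i : Fin k, a i + a (i + 1) ≤ n)
    (h2 : ∑ i, a i = (n * k - 1) / 2) :
    ∃ t : Fin k, ∀ i : Fin k, a i = if Even ((i - t : Fin k) : ℕ) then m else m + 1 := by
  have hk1 : 1 ≤ k := hk.pos
  have hno : Odd n := ⟨m, by omega⟩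
  have hnk_odd : Odd (n * k) := hno.mul hk
  obtain ⟨c, hc⟩ := hnk_odd
  have hsum_shift : ∑ i : Fin k, a (i + 1) = ∑ i, a i :=
    Fintype.sum_equiv (Equiv.addRight 1) _ _ (fun i => rfl)
  have h2' : ∑ i : Fin k, (a i + a (i + 1)) = n * k - 1 := by
    rw [Finset.sum_add_distrib, hsum_shift, h2]
    omega
  have hf : ∑ i : Fin k, (n - (a i + a (i + 1))) = 1 := by
    have htot : ∑ i : Fin k, ((n - (a i + a (i + 1))) + (a i + a (i + 1))) = ∑ _i : Fin k, n :=
      Finset.sum_congr rfl fun i _ => Nat.sub_add_cancel (h1 i)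
    rw [Finset.sum_add_distrib, h2', Finset.sum_const, card_univ, Fintype.card_fin,
      smul_eq_mul] at htot
    have hkn : k * n = n * k := mul_comm _ _
    set F := ∑ i : Fin k, (n - (a i + a (i + 1))) with hF
    omega
  have hex : ∃ j : Fin k, (n - (a j + a (j + 1))) ≠ 0 := by
    by_contra hcon
    push_neg at hcon
    rw [Finset.sum_eq_zero (fun i _ => hcon i)] at hf
    omega
  obtain ⟨j, hj⟩ := hex
  have hle := Finset.single_le_sum (f := fun i : Fin k => n - (a i + a (i + 1)))
    (fun i _ => Nat.zero_le _) (mem_univ j)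
  rw [hf] at hle
  have hfj : n - (a j + a (j + 1)) = 1 := by omega
  have hsj : a j + a (j + 1) = n - 1 := by
    have := h1 j
    omega
  have hrest : ∀ i, i ≠ j → a i + a (i + 1) = n := by
    intro i hij
    have hsplit := Finset.add_sum_erase univ (fun i : Fin k => n - (a i + a (i + 1))) (mem_univ j)
    rw [hf, hfj] at hsplit
    have hzero : ∑ i ∈ univ.erase j, (n - (a i + a (i + 1))) = 0 := by omega
    have h0 := (Finset.sum_eq_zero_iff.mp hzero) i (by simp [Finset.mem_erase, hij])
    have := h1 i
    omega
  have hb : ∀ i, a i ≤ n := fun i => le_trans (Nat.le_add_right _ _) (h1 i)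
  have claim : ∀ s : ℕ, s < k →
      a (j + 1 + (s : Fin k)) = if Even s then a (j + 1) else n - a (j + 1) := by
    intro s
    induction s with
    | zero => intro _; simp
    | succ s ih =>
      intro hs
      have hs' : s < k := by omega
      have hih := ih hs'
      have hne : j + 1 + (s : Fin k) ≠ j := by
        intro hcontra
        rw [add_assoc] at hcontra
        have h0 : (1 : Fin k) + (s : Fin k) = 0 := by
          have := add_eq_left.mp hcontra
          exact this
        have hval : ((1 : Fin k) + (s : Fin k)) = ((1 + s : ℕ) : Fin k) := by push_cast; ring
        rw [hval] at h0
        have := congrArg Fin.val h0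
        rw [Fin.val_cast_of_lt (by omega), Fin.val_zero] at this
        omega
      have hstep := hrest _ hne
      have hcast : ((s + 1 : ℕ) : Fin k) = (s : Fin k) + 1 := by push_cast; ring
      rw [hcast, ← add_assoc]
      by_cases hpar : Even s
      · rw [if_neg (by simp [Nat.even_add_one, hpar])]
        rw [if_pos hpar] at hih
        omega
      · rw [if_pos (Nat.even_add_one.2 hpar)]
        rw [if_neg hpar] at hih
        have := hb (j + 1)
        omega
  have hwrap : j + 1 + ((k - 1 : ℕ) : Fin k) = j := by
    rw [add_assoc]
    have h1k : (1 : Fin k) + ((k - 1 : ℕ) : Fin k) = 0 := by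
      have hx : ((1 + (k - 1) : ℕ) : Fin k) = 0 := by
        rw [show 1 + (k - 1) = k from by omega]
        exact Fin.natCast_self k
      rw [← hx]; push_cast; ring
    rw [h1k, add_zero]
  have hkm1_even : Even (k - 1) := by
    obtain ⟨c', hc'⟩ := hk
    exact ⟨c', by omega⟩
  have haj : a j = a (j + 1) := by
    have hcl := claim (k - 1) (by omega)
    rw [hwrap, if_pos hkm1_even] at hcl
    exact hcl
  have haj1 : a (j + 1) = m := by omega
  refine ⟨j + 1, fun i => ?_⟩
  have hslt := (i - (j + 1) : Fin k).isLt
  have hcast2 : ((((i - (j + 1) : Fin k) : ℕ)) : Fin k) = i - (j + 1) := Fin.cast_val_eq_self _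
  have hidx : j + 1 + ((((i - (j + 1) : Fin k)) : ℕ) : Fin k) = i := by
    rw [hcast2, add_comm, sub_add_cancel]
  have hc2 := claim (((i - (j + 1) : Fin k)) : ℕ) hslt
  rw [hidx] at hc2
  rw [hc2, haj1]
  split_ifs <;> omega

lemma bCount_bound {n k : ℕ} [NeZero k] {R : Finset (Fin k × Fin n × Fin n)}
    (h : CircNonAtt n k R) (i : Fin k) : bCount R i + bCount R (i + 1) ≤ n := by
  classical
  obtain ⟨h1, h2⟩ := (circNonAtt_iff R).mp h
  have hrow : ((boardsEquiv n k R i).image Prod.fst).card = (boardsEquiv n k R i).card := by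
    refine Finset.card_image_of_injOn ?_
    intro x hx y hy hxy
    by_contra hne
    exact (h1 i x hx y hy hne).1 hxy
  have hcol : ((boardsEquiv n k R (i + 1)).image Prod.snd).card
      = (boardsEquiv n k R (i + 1)).card := by
    refine Finset.card_image_of_injOn ?_
    intro x hx y hy hxy
    by_contra hne
    exact (h1 (i + 1) x hx y hy hne).2 hxy
  have hdisj : Disjoint ((boardsEquiv n k R i).image Prod.fst)
      ((boardsEquiv n k R (i + 1)).image Prod.snd) := by
    rw [Finset.disjoint_left]
    intro v hv1 hv2
    obtain ⟨x, hx, rfl⟩ := Finset.mem_image.mp hv1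
    obtain ⟨y, hy, hyx⟩ := Finset.mem_image.mp hv2
    exact h2 i x hx y hy hyx.symm
  have hcu := Finset.card_union_of_disjoint hdisj
  have hle : (((boardsEquiv n k R i).image Prod.fst)
      ∪ ((boardsEquiv n k R (i + 1)).image Prod.snd)).card ≤ n := by
    calc _ ≤ (univ : Finset (Fin n)).card := Finset.card_le_univ _
    _ = n := by rw [card_univ, Fintype.card_fin]
  rw [hcu, hrow, hcol] at hle
  rw [bCount_eq_card, bCount_eq_card]
  exact hle

lemma sum_bCount {n k : ℕ} (R : Finset (Fin k × Fin n × Fin n)) :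
    ∑ i : Fin k, bCount R i = R.card := by
  classical
  have h := Finset.card_eq_sum_card_fiberwise
    (f := fun r : Fin k × Fin n × Fin n => r.1) (s := R) (t := univ) (fun x _ => mem_univ _)
  rw [h]
  rfl

/-- the canonical shifted size pattern -/
def patFun (m k : ℕ) [NeZero k] (t : Fin k) : Fin k → ℕ :=
  fun i => if Even ((i - t : Fin k) : ℕ) then m else m + 1

lemma pattern_sum (m k j : ℕ) [NeZero k] (hkj : k = 2 * j + 1) (t : Fin k) :
    ∑ i : Fin k, patFun m k t i = ((2 * m + 1) * k - 1) / 2 := by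
  have hre : ∑ i : Fin k, patFun m k t i
      = ∑ s : Fin k, (if Even ((s : Fin k) : ℕ) then m else m + 1) :=
    Fintype.sum_equiv (Equiv.subRight t) _ _ (fun i => rfl)
  rw [hre, Fin.sum_univ_eq_sum_range (fun v => if Even v then m else m + 1) k, hkj, sum_alt]
  have hq : (2 * m + 1) * (2 * j + 1) = 2 * ((2 * m + 1) * j + m) + 1 := by ring
  rw [hq]
  set X := (2 * m + 1) * j + m with hX
  omega

lemma pattern_inj (m k : ℕ) [NeZero k] (hk : Odd k) {t t' : Fin k}
    (h : ∀ i : Fin k, patFun m k t i = patFun m k t' i) : t = t' := by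
  by_contra hne
  have hd : t - t' ≠ 0 := sub_ne_zero.mpr hne
  have hdv : ((t - t' : Fin k) : ℕ) ≠ 0 := by
    intro h0
    exact hd (Fin.ext (by rw [h0, Fin.val_zero]))
  have key : ∀ s : Fin k, (if Even ((s : Fin k) : ℕ) then m else m + 1)
      = (if Even (((s + (t - t') : Fin k)) : ℕ) then m else m + 1) := by
    intro s
    have h1 := h (t + s)
    unfold patFun at h1
    have e1 : t + s - t = s := by abel
    have e2 : t + s - t' = s + (t - t') := by abel
    rw [e1, e2] at h1
    exact h1
  by_cases hpar : Even ((t - t' : Fin k) : ℕ)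
  · have hdlt : ((t - t' : Fin k) : ℕ) < k := (t - t').isLt
    have hkey := key ⟨k - ((t - t' : Fin k) : ℕ), by omega⟩
    have hsval : (((⟨k - ((t - t' : Fin k) : ℕ), by omega⟩ + (t - t') : Fin k)) : ℕ) = 0 := by
      rw [Fin.add_def]
      simp only
      rw [show (k - ((t - t' : Fin k) : ℕ) + ((t - t' : Fin k) : ℕ)) = k from by omega,
        Nat.mod_self]
    have hspar : ¬ Even ((⟨k - ((t - t' : Fin k) : ℕ), by omega⟩ : Fin k) : ℕ) := by
      intro hcon
      obtain ⟨c1, hc1⟩ := hk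
      obtain ⟨c2, hc2⟩ := hpar
      simp only at hcon
      obtain ⟨c3, hc3⟩ := hcon
      omega
    rw [if_neg hspar, hsval, if_pos (by simp)] at hkey
    omega
  · have hkey := key 0
    have h0 : ((0 + (t - t') : Fin k) : ℕ) = ((t - t' : Fin k) : ℕ) := by rw [zero_add]
    rw [if_pos (by simp), h0, if_neg hpar] at hkey
    omega

/-- For `k` and `n` both odd, the number of maximum rook placements on the circular
chained board is `k·⌈n/2⌉·((n)_⌈n/2⌉)^⌊k/2⌋·((n)_⌊n/2⌋)^⌈k/2⌉`. -/
theorem circular_max_count_k_odd_n_odd (n k : ℕ) (hko : Odd k) (hno : Odd n) :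
    Nat.card {R : Finset (Fin k × Fin n × Fin n) //
        CircNonAtt n k R ∧ R.card = (n * k - 1) / 2} =
      k * ((n + 1) / 2) * (Nat.descFactorial n ((n + 1) / 2)) ^ (k / 2) *
        (Nat.descFactorial n (n / 2)) ^ ((k + 1) / 2) := by
  classical
  obtain ⟨m0, hm0⟩ := hno
  obtain ⟨j0, hj0⟩ := hko
  have hm' : n = 2 * m0 + 1 := by omega
  have hj' : k = 2 * j0 + 1 := by omega
  haveI : NeZero k := ⟨by omega⟩
  rw [Nat.card_eq_fintype_card, Fintype.card_subtype]
  set f : Finset (Fin k × Fin n × Fin n) → Fin k := fun R =>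
    if h : ∃ t, (fun i => bCount R i) = patFun m0 k t then h.choose else 0 with hfdef
  rw [card_eq_sum_card_fiberwise (f := f) (t := univ) (fun R _ => mem_univ _)]
  have hfib : ∀ t : Fin k,
      ((univ.filter fun R : Finset (Fin k × Fin n × Fin n) =>
          CircNonAtt n k R ∧ R.card = (n * k - 1) / 2).filter fun R => f R = t)
        = univ.filter fun R => CircNonAtt n k R ∧ ∀ i, bCount R i = patFun m0 k t i := by
    intro t
    ext R
    simp only [mem_filter, mem_univ, true_and]
    constructor
    · rintro ⟨⟨hc, hcard⟩, hft⟩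
      refine ⟨hc, ?_⟩
      obtain ⟨t', ht'⟩ := classify m0 k ⟨j0, by omega⟩ n hm' (fun i => bCount R i)
        (fun i => bCount_bound hc i) (by rw [sum_bCount, hcard])
      have hex : ∃ t0, (fun i => bCount R i) = patFun m0 k t0 :=
        ⟨t', funext fun i => ht' i⟩
      have hchoose : (fun i => bCount R i) = patFun m0 k (f R) := by
        rw [hfdef]
        simp only [dif_pos hex]
        exact hex.choose_spec
      rw [hft] at hchoose
      exact fun i => congrFun hchoose i
    · rintro ⟨hc, hcnt⟩
      have hcard : R.card = (n * k - 1) / 2 := by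
        rw [← sum_bCount, Finset.sum_congr rfl fun i _ => hcnt i]
        rw [hm']
        exact pattern_sum m0 k j0 hj' t
      refine ⟨⟨hc, hcard⟩, ?_⟩
      have hex : ∃ t0, (fun i => bCount R i) = patFun m0 k t0 := ⟨t, funext hcnt⟩
      have hchoose : (fun i => bCount R i) = patFun m0 k (f R) := by
        rw [hfdef]
        simp only [dif_pos hex]
        exact hex.choose_spec
      have hAA : ∀ i, patFun m0 k (f R) i = patFun m0 k t i := by
        intro i
        rw [← congrFun hchoose i]
        exact hcnt i
      exact pattern_inj m0 k ⟨j0, by omega⟩ hAA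
  have hcard_fib : ∀ t : Fin k,
      (univ.filter fun R : Finset (Fin k × Fin n × Fin n) =>
          CircNonAtt n k R ∧ ∀ i, bCount R i = patFun m0 k t i).card
        = ∏ i : Fin k,
            (n.choose (patFun m0 k t i)) *
              ((n - patFun m0 k t (i + 1)).descFactorial (patFun m0 k t i)) := by
    intro t
    rw [← Fintype.card_subtype, ← Nat.card_eq_fintype_card]
    exact fiber_count n k (patFun m0 k t)
  have hshift : ∀ t : Fin k,
      (∏ i : Fin k,
          (n.choose (patFun m0 k t i)) *
            ((n - patFun m0 k t (i + 1)).descFactorial (patFun m0 k t i)))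
        = ∏ i : Fin k,
            (n.choose (patFun m0 k 0 i)) *
              ((n - patFun m0 k 0 (i + 1)).descFactorial (patFun m0 k 0 i)) := by
    intro t
    have hre := Fintype.prod_equiv (Equiv.addRight t)
      (fun i : Fin k => (n.choose (patFun m0 k t (i + t))) *
        ((n - patFun m0 k t (i + t + 1)).descFactorial (patFun m0 k t (i + t))))
      (fun i : Fin k => (n.choose (patFun m0 k t i)) *
        ((n - patFun m0 k t (i + 1)).descFactorial (patFun m0 k t i)))
      (fun i => rfl)
    rw [← hre]
    refine Finset.prod_congr rfl fun i _ => ?_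
    have hA1 : patFun m0 k t (i + t) = patFun m0 k 0 i := by
      unfold patFun
      rw [show i + t - t = i from by abel, show i - 0 = i from by abel]
    have hA2 : patFun m0 k t (i + t + 1) = patFun m0 k 0 (i + 1) := by
      unfold patFun
      rw [show i + t + 1 - t = i + 1 from by abel, show i + 1 - 0 = i + 1 from by abel]
    simp only [hA1, hA2]
  rw [Finset.sum_congr rfl fun t _ => by rw [hfib t, hcard_fib t, hshift t]]
  rw [Finset.sum_const, card_univ, Fintype.card_fin, smul_eq_mul]
  -- now compute the base product
  have hA0 : ∀ i : Fin k, patFun m0 k 0 i = if Even (i : ℕ) then m0 else m0 + 1 := by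
    intro i
    unfold patFun
    rw [show i - 0 = i from by abel]
  have hG : ∀ i : Fin k,
      (n.choose (patFun m0 k 0 i)) *
          ((n - patFun m0 k 0 (i + 1)).descFactorial (patFun m0 k 0 i))
        = (fun v : ℕ => (n.choose (if Even v then m0 else m0 + 1)) *
            ((n - (if Even ((v + 1) % k) then m0 else m0 + 1)).descFactorial
              (if Even v then m0 else m0 + 1))) (i : ℕ) := by
    intro i
    simp only
    rw [hA0, hA0, fin_succ_val]
  rw [Finset.prod_congr rfl fun i _ => hG i]
  rw [Fin.prod_univ_eq_prod_range
    (fun v : ℕ => (n.choose (if Even v then m0 else m0 + 1)) *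
      ((n - (if Even ((v + 1) % k) then m0 else m0 + 1)).descFactorial
        (if Even v then m0 else m0 + 1))) k]
  rw [show range k = range (2 * j0 + 1) from by rw [hj'], Finset.prod_range_succ]
  -- inner product over range (2*j0)
  set c1 := (n.choose m0) * ((n - (m0 + 1)).descFactorial m0) with hc1
  set c2 := (n.choose (m0 + 1)) * ((n - m0).descFactorial (m0 + 1)) with hc2
  have hinner : ∏ v ∈ range (2 * j0),
      (n.choose (if Even v then m0 else m0 + 1)) *
        ((n - (if Even ((v + 1) % k) then m0 else m0 + 1)).descFactorial
          (if Even v then m0 else m0 + 1))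
      = (c1 * c2) ^ j0 := by
    rw [← prod_alt c1 c2 j0]
    refine Finset.prod_congr rfl fun v hv => ?_
    rw [Finset.mem_range] at hv
    have hv1 : (v + 1) % k = v + 1 := Nat.mod_eq_of_lt (by omega)
    rw [hv1]
    by_cases hp : Even v
    · rw [if_pos hp, if_neg (by simp [Nat.even_add_one, hp]), hc1, if_pos hp]
    · rw [if_neg hp, if_pos (Nat.even_add_one.2 hp), hc2, if_neg hp]
  rw [hinner]
  -- last term: v = 2*j0
  have hlast : (n.choose (if Even (2 * j0) then m0 else m0 + 1)) *
      ((n - (if Even ((2 * j0 + 1) % k) then m0 else m0 + 1)).descFactorial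
        (if Even (2 * j0) then m0 else m0 + 1))
      = (n.choose m0) * ((n - m0).descFactorial m0) := by
    have he : Even (2 * j0) := ⟨j0, by ring⟩
    have hmod : (2 * j0 + 1) % k = 0 := by rw [hj']; exact Nat.mod_self _
    rw [if_pos he, hmod, if_pos (by simp)]
  rw [hlast]
  -- final arithmetic
  have e1 : (n + 1) / 2 = m0 + 1 := by omega
  have e2 : n / 2 = m0 := by omega
  have e3 : k / 2 = j0 := by omega
  have e4 : (k + 1) / 2 = j0 + 1 := by omega
  rw [e1, e2, e3, e4]
  have k1 : n - (m0 + 1) = m0 := by omega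
  have k2 : n - m0 = m0 + 1 := by omega
  have i1 : c1 = n.descFactorial m0 := by
    rw [hc1, k1, Nat.descFactorial_self, Nat.descFactorial_eq_factorial_mul_choose n m0,
      mul_comm]
  have i2 : c2 = n.descFactorial (m0 + 1) := by
    rw [hc2, k2, Nat.descFactorial_self,
      Nat.descFactorial_eq_factorial_mul_choose n (m0 + 1), mul_comm]
  have i3 : (m0 + 1).descFactorial m0 = (m0 + 1).factorial := by
    have h := Nat.descFactorial_succ (m0 + 1) m0
    rw [Nat.descFactorial_self, show m0 + 1 - m0 = 1 from by omega, one_mul] at h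
    exact h.symm
  have i4 : n.choose m0 = n.choose (m0 + 1) := by
    conv_lhs => rw [show m0 = n - (m0 + 1) from by omega]
    exact Nat.choose_symm (by omega)
  have i5 : (n.choose m0) * ((n - m0).descFactorial m0) = n.descFactorial (m0 + 1) := by
    rw [k2, i3, i4, Nat.descFactorial_eq_factorial_mul_choose n (m0 + 1), mul_comm]
  rw [i5, i1, i2]
  have i6 : n.descFactorial (m0 + 1) = (m0 + 1) * n.descFactorial m0 := by
    rw [Nat.descFactorial_succ, k2]
  rw [i6, mul_pow, mul_pow]
  ring
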